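/- Let α > 0, δ ∈ (0, α), set ω = (α − δ)/2, and let g : (0,∞) → ℝ have g' ≤ 0 satisfying −g'(s + t) ≤ −g'(s) e^{(α−δ)t} for all s > 0, t ≥ 0. Let E be a real Hilbert space and ξ : (0,∞) → E strongly measurable with ∫₀^∞ −g'(s) ‖ξ(s)‖² ds < ∞. Define η(s) = ∫₀^s e^{−(1+ω)(s−y)} ξ(y) dy. Then √(−g'(s)) ‖η(s)‖ ≤ ∫₀^s e^{−(s−y)} √(−g'(y)) ‖ξ(y)‖ dy for every s > 0, and consequently ∫₀^∞ −g'(s) ‖η(s)‖² ds ≤ ∫₀^∞ −g'(s) ‖ξ(s)‖² ds. -/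

import Mathlib

open MeasureTheory Filter Topology Set Real
open scoped ENNReal

theorem aux_tonelli (W : ℝ → ℝ≥0∞) (hW : Measurable W) :
    ∫⁻ s in Set.Ioi (0:ℝ), ∫⁻ y in Set.Ioc (0:ℝ) s, ENNReal.ofReal (Real.exp (y - s)) * W y
      ≤ ∫⁻ y in Set.Ioi (0:ℝ), W y := by
  have h1 : ∀ s : ℝ, (∫⁻ y in Set.Ioc (0:ℝ) s, ENNReal.ofReal (Real.exp (y - s)) * W y)
      = ∫⁻ y in Set.Ioi (0:ℝ),
          (Set.Iic s).indicator (fun y => ENNReal.ofReal (Real.exp (y - s)) * W y) y := by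
    intro s
    rw [lintegral_indicator measurableSet_Iic, Measure.restrict_restrict measurableSet_Iic,
      Set.Iic_inter_Ioi]
  calc ∫⁻ s in Set.Ioi (0:ℝ), ∫⁻ y in Set.Ioc (0:ℝ) s, ENNReal.ofReal (Real.exp (y - s)) * W y
      = ∫⁻ s in Set.Ioi (0:ℝ), ∫⁻ y in Set.Ioi (0:ℝ),
          (Set.Iic s).indicator (fun y => ENNReal.ofReal (Real.exp (y - s)) * W y) y := by
        exact lintegral_congr fun s => h1 s
    _ = ∫⁻ y in Set.Ioi (0:ℝ), ∫⁻ s in Set.Ioi (0:ℝ),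
          (Set.Iic s).indicator (fun y => ENNReal.ofReal (Real.exp (y - s)) * W y) y := by
        apply lintegral_lintegral_swap
        have : (Function.uncurry fun (s y : ℝ) =>
            (Set.Iic s).indicator (fun y => ENNReal.ofReal (Real.exp (y - s)) * W y) y)
            = fun p : ℝ × ℝ => ({q : ℝ × ℝ | q.2 ≤ q.1}).indicator
                (fun q => ENNReal.ofReal (Real.exp (q.2 - q.1)) * W q.2) p := by
          ext p
          simp only [Function.uncurry, Set.indicator_apply, Set.mem_Iic, Set.mem_setOf_eq]
        rw [this]
        apply Measurable.aemeasurable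
        apply Measurable.indicator
        · exact ((Real.measurable_exp.comp (measurable_snd.sub measurable_fst)).ennreal_ofReal).mul
            (hW.comp measurable_snd)
        · exact measurableSet_le measurable_snd measurable_fst
    _ = ∫⁻ y in Set.Ioi (0:ℝ), W y := by
        apply setLIntegral_congr_fun measurableSet_Ioi
        intro y hy
        have h2 : ∀ s : ℝ, (Set.Iic s).indicator
            (fun y => ENNReal.ofReal (Real.exp (y - s)) * W y) y
            = (Set.Ici y).indicator (fun s => ENNReal.ofReal (Real.exp (y - s))) s * W y := by
          intro s
          simp only [Set.indicator_apply, Set.mem_Iic, Set.mem_Ici]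
          by_cases h : y ≤ s <;> simp [h]
        simp_rw [h2]
        have hm : Measurable fun s : ℝ => (Set.Ici y).indicator
            (fun s => ENNReal.ofReal (Real.exp (y - s))) s :=
          Measurable.indicator (by fun_prop) measurableSet_Ici
        rw [lintegral_mul_const'' _ hm.aemeasurable, lintegral_indicator measurableSet_Ici,
          Measure.restrict_restrict measurableSet_Ici]
        have : Set.Ici y ∩ Set.Ioi (0:ℝ) = Set.Ici y := by
          apply Set.inter_eq_self_of_subset_left
          intro x hx
          exact lt_of_lt_of_le hy (Set.mem_Ici.mp hx)
        rw [this]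
        have hIoi : (volume : Measure ℝ).restrict (Set.Ici y) = volume.restrict (Set.Ioi y) := by
          exact Measure.restrict_congr_set Ioi_ae_eq_Ici.symm
        rw [hIoi]
        have hInt : IntegrableOn (fun s : ℝ => Real.exp (y - s)) (Set.Ioi y) := by
          have := exp_neg_integrableOn_Ioi y (b := 1) one_pos
          have heq : (fun s : ℝ => Real.exp (y - s)) = fun s => Real.exp y * Real.exp (-1 * s) := by
            ext s; rw [← Real.exp_add]; ring_nf
          rw [heq]
          exact this.const_mul _
        rw [← ofReal_integral_eq_lintegral_ofReal hInt
          (Filter.Eventually.of_forall fun s => (Real.exp_pos _).le)]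
        have : (∫ s in Set.Ioi y, Real.exp (y - s)) = 1 := by
          have heq : ∀ s : ℝ, Real.exp (y - s) = Real.exp y * Real.exp (-s) := by
            intro s; rw [← Real.exp_add]; ring_nf
          simp_rw [heq]
          rw [integral_const_mul, integral_exp_neg_Ioi, ← Real.exp_add]
          simp
        rw [this]
        simp
    _ ≤ ∫⁻ y in Set.Ioi (0:ℝ), W y := le_rfl


/-- the resolvent estimate for the range condition `Range(I - S) = M`:
with `ω = (α-δ)/2` and `η(s) = ∫₀^s e^{-(1+ω)(s-y)} ξ(y) dy`, one has
`√(-g'(s)) ‖η(s)‖ ≤ (E * φ)(s)` pointwise, and `‖η‖_M ≤ ‖ξ‖_M`. -/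
theorem mgt_resolvent_estimate
    {E : Type*} [NormedAddCommGroup E] [InnerProductSpace ℝ E] [CompleteSpace E]
    (α δ : ℝ) (hδ : 0 < δ) (hδα : δ < α)
    (g' : ℝ → ℝ)
    (hg'_nonpos : ∀ s ∈ Set.Ioi (0 : ℝ), g' s ≤ 0)
    (hexp : ∀ s ∈ Set.Ioi (0 : ℝ), ∀ t : ℝ, 0 ≤ t →
      -g' (s + t) ≤ -g' s * Real.exp ((α - δ) * t))
    (ξ : ℝ → E)
    (hmeas : AEStronglyMeasurable ξ (MeasureTheory.volume.restrict (Set.Ioi 0)))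
    (hint : IntegrableOn (fun s => -g' s * ‖ξ s‖ ^ 2) (Set.Ioi 0))
    (η : ℝ → E)
    (hη : ∀ s : ℝ, η s = ∫ y in (0 : ℝ)..s, Real.exp (-(1 + (α - δ) / 2) * (s - y)) • ξ y) :
    (∀ s ∈ Set.Ioi (0 : ℝ),
      Real.sqrt (-g' s) * ‖η s‖
        ≤ ∫ y in (0 : ℝ)..s, Real.exp (-(s - y)) * (Real.sqrt (-g' y) * ‖ξ y‖)) ∧
    (∫ s in Set.Ioi (0 : ℝ), -g' s * ‖η s‖ ^ 2)
      ≤ ∫ s in Set.Ioi (0 : ℝ), -g' s * ‖ξ s‖ ^ 2 := by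
  set ω : ℝ := (α - δ) / 2 with hωdef
  have hω : 0 < ω := by simp only [hωdef]; linarith
  have h2ω : α - δ = 2 * ω := by rw [hωdef]; ring
  -- nonnegativity of -g' on Ioi 0
  have hg0 : ∀ y ∈ Set.Ioi (0:ℝ), 0 ≤ -g' y := fun y hy => neg_nonneg.2 (hg'_nonpos y hy)
  -- key pointwise exponential estimate
  have hA : ∀ s ∈ Set.Ioi (0:ℝ), ∀ y ∈ Set.Ioc (0:ℝ) s,
      Real.sqrt (-g' s) * Real.exp (-(1 + ω) * (s - y))
        ≤ Real.exp (-(s - y)) * Real.sqrt (-g' y) := by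
    intro s hs y hy
    have h0y : 0 ≤ -g' y := hg0 y hy.1
    have h1 : -g' s ≤ -g' y * Real.exp ((α - δ) * (s - y)) := by
      have := hexp y hy.1 (s - y) (by linarith [hy.2])
      rwa [add_sub_cancel] at this
    have hsq : Real.sqrt (Real.exp ((α - δ) * (s - y))) = Real.exp (ω * (s - y)) := by
      rw [show (α - δ) * (s - y) = ω * (s - y) + ω * (s - y) by rw [h2ω]; ring,
        Real.exp_add, Real.sqrt_mul_self (Real.exp_pos _).le]
    have h2 : Real.sqrt (-g' s) ≤ Real.sqrt (-g' y) * Real.exp (ω * (s - y)) := by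
      have := Real.sqrt_le_sqrt h1
      rwa [Real.sqrt_mul h0y, hsq] at this
    calc Real.sqrt (-g' s) * Real.exp (-(1 + ω) * (s - y))
        ≤ (Real.sqrt (-g' y) * Real.exp (ω * (s - y))) * Real.exp (-(1 + ω) * (s - y)) :=
          mul_le_mul_of_nonneg_right h2 (Real.exp_pos _).le
      _ = Real.exp (-(s - y)) * Real.sqrt (-g' y) := by
          rw [mul_assoc, ← Real.exp_add]; ring_nf
  -- a measurable version of -g' on Ioi 0
  have hgm : AEMeasurable (fun x => -g' x) (volume.restrict (Set.Ioi 0)) := by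
    have hanti : AntitoneOn (fun x => -g' x * Real.exp (-(α - δ) * x)) (Set.Ioi (0:ℝ)) := by
      intro x hx y hy hxy
      have h1 : -g' y ≤ -g' x * Real.exp ((α - δ) * (y - x)) := by
        have := hexp x hx (y - x) (by linarith)
        rwa [add_sub_cancel] at this
      have := mul_le_mul_of_nonneg_right h1 (Real.exp_pos (-(α - δ) * y)).le
      calc -g' y * Real.exp (-(α - δ) * y)
          ≤ -g' x * Real.exp ((α - δ) * (y - x)) * Real.exp (-(α - δ) * y) := this
        _ = -g' x * Real.exp (-(α - δ) * x) := by
            rw [mul_assoc, ← Real.exp_add]; ring_nf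
    have h1 : AEMeasurable (fun x => -g' x * Real.exp (-(α - δ) * x))
        (volume.restrict (Set.Ioi 0)) :=
      aemeasurable_restrict_of_antitoneOn measurableSet_Ioi hanti
    have h2 : AEMeasurable (fun x => (-g' x * Real.exp (-(α - δ) * x)) * Real.exp ((α - δ) * x))
        (volume.restrict (Set.Ioi 0)) :=
      h1.mul (Real.measurable_exp.comp (measurable_const.mul measurable_id)).aemeasurable
    refine h2.congr (Filter.Eventually.of_forall fun x => ?_)
    show -g' x * Real.exp (-(α - δ) * x) * Real.exp ((α - δ) * x) = -g' x
    rw [mul_assoc, ← Real.exp_add]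
    ring_nf
    simp
  -- measurable representatives
  obtain ⟨G, hGmeas, hGe⟩ := hgm
  set ξ' : ℝ → E := hmeas.mk ξ with hξ'def
  have hξ'sm : StronglyMeasurable ξ' := hmeas.stronglyMeasurable_mk
  have hξe : ξ =ᵐ[volume.restrict (Set.Ioi 0)] ξ' := hmeas.ae_eq_mk
  set W : ℝ → ℝ≥0∞ := fun y => ENNReal.ofReal (G y * ‖ξ' y‖ ^ 2) with hWdef
  have hWm : Measurable W := by
    apply Measurable.ennreal_ofReal
    exact hGmeas.mul ((hξ'sm.norm.measurable).pow_const 2)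
  -- restriction measure identity
  have hrr : ∀ s : ℝ, (volume.restrict (Set.Ioi (0:ℝ))).restrict (Set.Iic s)
      = volume.restrict (Set.Ioc 0 s) := by
    intro s
    rw [Measure.restrict_restrict measurableSet_Iic, Set.Iic_inter_Ioi]
  -- the main pointwise claims
  have key : ∀ s ∈ Set.Ioi (0:ℝ),
      (Real.sqrt (-g' s) * ‖η s‖
        ≤ ∫ y in (0:ℝ)..s, Real.exp (-(s - y)) * (Real.sqrt (-g' y) * ‖ξ y‖)) ∧
      (ENNReal.ofReal (-g' s * ‖η s‖ ^ 2)
        ≤ ∫⁻ y in Set.Ioc (0:ℝ) s, ENNReal.ofReal (Real.exp (y - s)) * W y) := by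
    intro s hs
    have hs0 : (0:ℝ) < s := hs
    have hRHS0 : 0 ≤ ∫ y in (0:ℝ)..s, Real.exp (-(s - y)) * (Real.sqrt (-g' y) * ‖ξ y‖) := by
      apply intervalIntegral.integral_nonneg hs0.le
      intro u _
      positivity
    rcases eq_or_lt_of_le (hg0 s hs) with hgs | hgs
    · constructor
      · rw [← hgs, Real.sqrt_zero, zero_mul]; exact hRHS0
      · rw [← hgs, zero_mul]; simp
    -- positive case
    · have hlow : ∀ y ∈ Set.Ioc (0:ℝ) s, -g' s * Real.exp (-(α - δ) * s) ≤ -g' y := by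
        intro y hy
        have h1 : -g' s ≤ -g' y * Real.exp ((α - δ) * (s - y)) := by
          have := hexp y hy.1 (s - y) (by linarith [hy.2])
          rwa [add_sub_cancel] at this
        have e1 : -g' s * Real.exp (-(α - δ) * (s - y)) ≤ -g' y := by
          have h := mul_le_mul_of_nonneg_right h1 (Real.exp_pos (-(α - δ) * (s - y))).le
          rwa [mul_assoc, ← Real.exp_add,
            (by ring : (α - δ) * (s - y) + -(α - δ) * (s - y) = 0), Real.exp_zero, mul_one] at h
        calc -g' s * Real.exp (-(α - δ) * s) ≤ -g' s * Real.exp (-(α - δ) * (s - y)) := by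
              apply mul_le_mul_of_nonneg_left _ hgs.le
              apply Real.exp_le_exp.2
              nlinarith [hy.1, h2ω, hω]
          _ ≤ -g' y := e1
      set c : ℝ := -g' s * Real.exp (-(α - δ) * s) with hcdef
      have hc : 0 < c := mul_pos hgs (Real.exp_pos _)
      -- integrability facts on Ioc 0 s
      have hw : IntegrableOn (fun y => -g' y * ‖ξ y‖ ^ 2) (Set.Ioc 0 s) :=
        hint.mono_set Set.Ioc_subset_Ioi_self
      have hgm2 : AEMeasurable (fun y => -g' y) (volume.restrict (Set.Ioc 0 s)) := by
        rw [← hrr s]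
        exact hGmeas.aemeasurable.congr (hGe.restrict (s := Set.Iic s)).symm
      have hmeas2 : AEStronglyMeasurable ξ (volume.restrict (Set.Ioc 0 s)) := by
        rw [← hrr s]; exact hmeas.restrict
      have hnsq : IntegrableOn (fun y => ‖ξ y‖ ^ 2) (Set.Ioc 0 s) := by
        apply Integrable.mono' (hw.const_mul c⁻¹)
        · exact (hmeas2.norm.aemeasurable.pow_const 2).aestronglyMeasurable
        · rw [ae_restrict_iff' measurableSet_Ioc]
          apply Filter.Eventually.of_forall
          intro y hy
          rw [Real.norm_eq_abs, abs_of_nonneg (sq_nonneg _)]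
          have hby : c ≤ -g' y := hlow y hy
          have h2 : c⁻¹ * (c * ‖ξ y‖ ^ 2) ≤ c⁻¹ * (-g' y * ‖ξ y‖ ^ 2) :=
            mul_le_mul_of_nonneg_left
              (mul_le_mul_of_nonneg_right hby (sq_nonneg _)) (inv_nonneg.2 hc.le)
          have h3 : c⁻¹ * (c * ‖ξ y‖ ^ 2) = ‖ξ y‖ ^ 2 := by
            field_simp
          linarith
      have hξL2 : MemLp ξ 2 (volume.restrict (Set.Ioc 0 s)) :=
        (memLp_two_iff_integrable_sq_norm hmeas2).2 hnsq
      have hξ1 : IntegrableOn ξ (Set.Ioc 0 s) :=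
        memLp_one_iff_integrable.1 (hξL2.mono_exponent (by norm_num))
      have hφsm : AEStronglyMeasurable (fun y => Real.sqrt (-g' y) * ‖ξ y‖)
          (volume.restrict (Set.Ioc 0 s)) :=
        ((Real.continuous_sqrt.measurable.comp_aemeasurable hgm2).mul
          hmeas2.norm.aemeasurable).aestronglyMeasurable
      have hφsq : IntegrableOn (fun y => (Real.sqrt (-g' y) * ‖ξ y‖) ^ 2) (Set.Ioc 0 s) := by
        apply hw.congr
        rw [Filter.EventuallyEq, ae_restrict_iff' measurableSet_Ioc]
        refine ae_of_all _ fun y hy => ?_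
        rw [mul_pow, Real.sq_sqrt (hg0 y hy.1)]
      have hφL2 : MemLp (fun y => Real.sqrt (-g' y) * ‖ξ y‖) 2
          (volume.restrict (Set.Ioc 0 s)) :=
        (memLp_two_iff_integrable_sq hφsm).2 hφsq
      have hφ1 : IntegrableOn (fun y => Real.sqrt (-g' y) * ‖ξ y‖) (Set.Ioc 0 s) :=
        memLp_one_iff_integrable.1 (hφL2.mono_exponent (by norm_num))
      have hF1 : IntegrableOn (fun y => Real.exp (-(s - y)) * (Real.sqrt (-g' y) * ‖ξ y‖))
          (Set.Ioc 0 s) := by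
        apply Integrable.mono' hφ1
        · exact (Continuous.aestronglyMeasurable
            (by fun_prop : Continuous fun y : ℝ => Real.exp (-(s - y)))).mul hφsm
        · rw [ae_restrict_iff' measurableSet_Ioc]
          apply Filter.Eventually.of_forall
          intro y hy
          rw [Real.norm_eq_abs, abs_of_nonneg (by positivity)]
          have h1 : Real.exp (-(s - y)) ≤ 1 := Real.exp_le_one_iff.2 (by linarith [hy.2])
          nlinarith [Real.sqrt_nonneg (-g' y), norm_nonneg (ξ y),
            mul_nonneg (Real.sqrt_nonneg (-g' y)) (norm_nonneg (ξ y))]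
      have hL1 : IntegrableOn
          (fun y => Real.sqrt (-g' s) * (Real.exp (-(1 + ω) * (s - y)) * ‖ξ y‖))
          (Set.Ioc 0 s) := by
        apply Integrable.const_mul
        apply Integrable.mono' hξ1.norm
        · exact (Continuous.aestronglyMeasurable
            (by fun_prop : Continuous fun y : ℝ => Real.exp (-(1 + ω) * (s - y)))).mul
            hmeas2.norm.aemeasurable.aestronglyMeasurable
        · rw [ae_restrict_iff' measurableSet_Ioc]
          apply Filter.Eventually.of_forall
          intro y hy
          rw [Real.norm_eq_abs, abs_of_nonneg (by positivity)]
          have h1 : Real.exp (-(1 + ω) * (s - y)) ≤ 1 := by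
            apply Real.exp_le_one_iff.2
            nlinarith [hy.2, hω]
          nlinarith [norm_nonneg (ξ y)]
      -- interval integrability
      have hiL : IntervalIntegrable
          (fun y => Real.sqrt (-g' s) * (Real.exp (-(1 + ω) * (s - y)) * ‖ξ y‖))
          volume 0 s := (intervalIntegrable_iff_integrableOn_Ioc_of_le hs0.le).2 hL1
      have hiR : IntervalIntegrable
          (fun y => Real.exp (-(s - y)) * (Real.sqrt (-g' y) * ‖ξ y‖)) volume 0 s :=
        (intervalIntegrable_iff_integrableOn_Ioc_of_le hs0.le).2 hF1
      -- part 1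
      have part1 : Real.sqrt (-g' s) * ‖η s‖
          ≤ ∫ y in (0:ℝ)..s, Real.exp (-(s - y)) * (Real.sqrt (-g' y) * ‖ξ y‖) := by
        rw [hη s]
        have hnorm : ∀ y : ℝ, ‖Real.exp (-(1 + ω) * (s - y)) • ξ y‖
            = Real.exp (-(1 + ω) * (s - y)) * ‖ξ y‖ := fun y => by
          rw [norm_smul, Real.norm_eq_abs, Real.abs_exp]
        calc Real.sqrt (-g' s) * ‖∫ y in (0:ℝ)..s, Real.exp (-(1 + ω) * (s - y)) • ξ y‖
            ≤ Real.sqrt (-g' s) * ∫ y in (0:ℝ)..s, ‖Real.exp (-(1 + ω) * (s - y)) • ξ y‖ := by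
              apply mul_le_mul_of_nonneg_left _ (Real.sqrt_nonneg _)
              exact intervalIntegral.norm_integral_le_integral_norm hs0.le
          _ = ∫ y in (0:ℝ)..s,
              Real.sqrt (-g' s) * (Real.exp (-(1 + ω) * (s - y)) * ‖ξ y‖) := by
              simp_rw [hnorm]
              rw [← intervalIntegral.integral_const_mul]
          _ ≤ ∫ y in (0:ℝ)..s, Real.exp (-(s - y)) * (Real.sqrt (-g' y) * ‖ξ y‖) := by
              apply intervalIntegral.integral_mono_ae_restrict hs0.le hiL hiR
              have hz : ∀ᵐ y ∂(volume.restrict (Set.Icc (0:ℝ) s)), y ≠ 0 := by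
                refine (ae_restrict_iff' measurableSet_Icc).2 ?_
                have : ∀ᵐ y : ℝ ∂volume, y ≠ 0 := by
                  simp [ae_iff]
                exact this.mono fun y hy _ => hy
              have hmem : ∀ᵐ y ∂(volume.restrict (Set.Icc (0:ℝ) s)), y ∈ Set.Icc (0:ℝ) s :=
                ae_restrict_mem measurableSet_Icc
              filter_upwards [hz, hmem] with y hy0 hymem
              have hy : y ∈ Set.Ioc (0:ℝ) s := ⟨lt_of_le_of_ne hymem.1 (Ne.symm hy0), hymem.2⟩
              rw [← mul_assoc, ← mul_assoc]
              exact mul_le_mul_of_nonneg_right (hA s hs y hy) (norm_nonneg _)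
      refine ⟨part1, ?_⟩
      -- part 2 pointwise
      set φ : ℝ → ℝ := fun y => Real.sqrt (-g' y) * ‖ξ y‖ with hφdef
      set F : ℝ := ∫ y in (0:ℝ)..s, Real.exp (-(s - y)) * φ y with hFdef
      have hF0 : 0 ≤ F := hRHS0
      have hstep1 : ENNReal.ofReal (-g' s * ‖η s‖ ^ 2) ≤ ENNReal.ofReal (F ^ 2) := by
        apply ENNReal.ofReal_le_ofReal
        have he : -g' s * ‖η s‖ ^ 2 = (Real.sqrt (-g' s) * ‖η s‖) ^ 2 := by
          rw [mul_pow, Real.sq_sqrt (hg0 s hs)]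
        rw [he]
        exact pow_le_pow_left₀ (mul_nonneg (Real.sqrt_nonneg _) (norm_nonneg _)) part1 2
      have hFof : ENNReal.ofReal F
          = ∫⁻ y in Set.Ioc (0:ℝ) s, ENNReal.ofReal (Real.exp (-(s - y)) * φ y) := by
        rw [hFdef, intervalIntegral.integral_of_le hs0.le]
        exact ofReal_integral_eq_lintegral_ofReal hF1
          (Filter.Eventually.of_forall fun y => by positivity)
      set a : ℝ → ℝ≥0∞ := fun y => ENNReal.ofReal (Real.exp (-(s - y) / 2)) with hadef
      set b : ℝ → ℝ≥0∞ := fun y => ENNReal.ofReal (Real.exp (-(s - y) / 2) * φ y) with hbdef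
      have hsplit : ∀ y : ℝ, ENNReal.ofReal (Real.exp (-(s - y)) * φ y) = a y * b y := by
        intro y
        simp only [hadef, hbdef]
        have hre : Real.exp (-(s - y)) * φ y
            = Real.exp (-(s - y) / 2) * (Real.exp (-(s - y) / 2) * φ y) := by
          rw [show Real.exp (-(s - y) / 2) * (Real.exp (-(s - y) / 2) * φ y)
              = (Real.exp (-(s - y) / 2) * Real.exp (-(s - y) / 2)) * φ y from
              (mul_assoc _ _ _).symm, ← Real.exp_add,
            show -(s - y) / 2 + -(s - y) / 2 = -(s - y) by ring]
        rw [hre, ENNReal.ofReal_mul (Real.exp_pos _).le]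
      have ham : AEMeasurable a (volume.restrict (Set.Ioc (0:ℝ) s)) :=
        (Measurable.ennreal_ofReal (by fun_prop)).aemeasurable
      have hbm : AEMeasurable b (volume.restrict (Set.Ioc (0:ℝ) s)) :=
        (((by fun_prop : Measurable fun y : ℝ => Real.exp (-(s - y) / 2)).aemeasurable.mul
          hφsm.aemeasurable)).ennreal_ofReal
      have hconj : Real.HolderConjugate 2 2 := Real.HolderConjugate.two_two
      have hHsq : ENNReal.ofReal F ^ 2 ≤ (∫⁻ y in Set.Ioc (0:ℝ) s, a y ^ (2:ℝ))
          * (∫⁻ y in Set.Ioc (0:ℝ) s, b y ^ (2:ℝ)) := by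
        have hH := ENNReal.lintegral_mul_le_Lp_mul_Lq (volume.restrict (Set.Ioc (0:ℝ) s))
          hconj ham hbm
        have hab : ENNReal.ofReal F = ∫⁻ y in Set.Ioc (0:ℝ) s, (a * b) y := by
          rw [hFof]; exact lintegral_congr fun y => hsplit y
        rw [hab]
        calc (∫⁻ y in Set.Ioc (0:ℝ) s, (a * b) y) ^ 2
            ≤ ((∫⁻ y in Set.Ioc (0:ℝ) s, a y ^ (2:ℝ)) ^ (1/(2:ℝ))
              * (∫⁻ y in Set.Ioc (0:ℝ) s, b y ^ (2:ℝ)) ^ (1/(2:ℝ))) ^ 2 :=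
              pow_le_pow_left₀ zero_le hH 2
          _ = (∫⁻ y in Set.Ioc (0:ℝ) s, a y ^ (2:ℝ))
              * (∫⁻ y in Set.Ioc (0:ℝ) s, b y ^ (2:ℝ)) := by
              rw [mul_pow, ← ENNReal.rpow_natCast (_ ^ (1/(2:ℝ))) 2,
                ← ENNReal.rpow_natCast ((∫⁻ y in Set.Ioc (0:ℝ) s, b y ^ (2:ℝ)) ^ (1/(2:ℝ))) 2,
                ← ENNReal.rpow_mul, ← ENNReal.rpow_mul]
              norm_num
      have haInt : (∫⁻ y in Set.Ioc (0:ℝ) s, a y ^ (2:ℝ)) ≤ 1 := by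
        have ha2 : ∀ y : ℝ, a y ^ (2:ℝ) = ENNReal.ofReal (Real.exp (y - s)) := by
          intro y
          simp only [hadef]
          rw [ENNReal.ofReal_rpow_of_nonneg (Real.exp_pos _).le (by norm_num : (0:ℝ) ≤ 2),
            ← Real.exp_mul, show -(s - y) / 2 * 2 = y - s by ring]
        simp_rw [ha2]
        have hintexp : IntegrableOn (fun y : ℝ => Real.exp (y - s)) (Set.Ioc 0 s) :=
          (intervalIntegrable_iff_integrableOn_Ioc_of_le hs0.le).1
            ((by fun_prop : Continuous fun y : ℝ => Real.exp (y - s)).intervalIntegrable 0 s)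
        rw [← ofReal_integral_eq_lintegral_ofReal hintexp
          (Filter.Eventually.of_forall fun y => (Real.exp_pos _).le)]
        apply ENNReal.ofReal_le_one.2
        rw [← intervalIntegral.integral_of_le hs0.le,
          intervalIntegral.integral_comp_sub_right (fun u => Real.exp u) s, integral_exp]
        have := Real.exp_pos (0 - s)
        simp only [sub_self, Real.exp_zero]
        linarith
      have hbW : (∫⁻ y in Set.Ioc (0:ℝ) s, b y ^ (2:ℝ))
          = ∫⁻ y in Set.Ioc (0:ℝ) s, ENNReal.ofReal (Real.exp (y - s)) * W y := by
        have h1 : (∫⁻ y in Set.Ioc (0:ℝ) s, b y ^ (2:ℝ))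
            = ∫⁻ y in Set.Ioc (0:ℝ) s, ENNReal.ofReal (Real.exp (y - s))
                * ENNReal.ofReal (-g' y * ‖ξ y‖ ^ 2) := by
          apply setLIntegral_congr_fun measurableSet_Ioc
          intro y hy
          have e1 : b y ^ (2:ℝ) = b y * b y := by
            rw [show (2:ℝ) = ((2:ℕ):ℝ) by norm_num, ENNReal.rpow_natCast, pow_two]
          beta_reduce
          rw [e1]
          simp only [hbdef, hφdef]
          rw [← ENNReal.ofReal_mul (by positivity),
            ← ENNReal.ofReal_mul (Real.exp_pos _).le]
          congr 1
          have hms : Real.sqrt (-g' y) * Real.sqrt (-g' y) = -g' y :=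
            Real.mul_self_sqrt (hg0 y hy.1)
          calc Real.exp (-(s - y) / 2) * (Real.sqrt (-g' y) * ‖ξ y‖)
                * (Real.exp (-(s - y) / 2) * (Real.sqrt (-g' y) * ‖ξ y‖))
              = (Real.exp (-(s - y) / 2) * Real.exp (-(s - y) / 2))
                * ((Real.sqrt (-g' y) * Real.sqrt (-g' y)) * (‖ξ y‖ * ‖ξ y‖)) := by ring
            _ = Real.exp (y - s) * (-g' y * ‖ξ y‖ ^ 2) := by
                rw [← Real.exp_add, hms, show -(s - y) / 2 + -(s - y) / 2 = y - s by ring,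
                  pow_two]
        rw [h1]
        apply lintegral_congr_ae
        have hGe' : (fun x => -g' x) =ᵐ[volume.restrict (Set.Ioc (0:ℝ) s)] G :=
          ae_restrict_of_ae_restrict_of_subset Set.Ioc_subset_Ioi_self hGe
        have hξe' : ξ =ᵐ[volume.restrict (Set.Ioc (0:ℝ) s)] ξ' :=
          ae_restrict_of_ae_restrict_of_subset Set.Ioc_subset_Ioi_self hξe
        filter_upwards [hGe', hξe'] with y h1y h2y
        have h1y' : -g' y = G y := h1y
        have h2y' : ξ y = ξ' y := h2y
        simp only [hWdef]
        rw [h1y', h2y']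
      calc ENNReal.ofReal (-g' s * ‖η s‖ ^ 2) ≤ ENNReal.ofReal (F ^ 2) := hstep1
        _ = ENNReal.ofReal F ^ 2 := by rw [ENNReal.ofReal_pow hF0]
        _ ≤ (∫⁻ y in Set.Ioc (0:ℝ) s, a y ^ (2:ℝ))
            * (∫⁻ y in Set.Ioc (0:ℝ) s, b y ^ (2:ℝ)) := hHsq
        _ ≤ 1 * (∫⁻ y in Set.Ioc (0:ℝ) s, b y ^ (2:ℝ)) := mul_le_mul_left haInt _
        _ = ∫⁻ y in Set.Ioc (0:ℝ) s, b y ^ (2:ℝ) := one_mul _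
        _ = ∫⁻ y in Set.Ioc (0:ℝ) s, ENNReal.ofReal (Real.exp (y - s)) * W y := hbW
  constructor
  · exact fun s hs => (key s hs).1
  have hnn : (0:ℝ→ℝ) ≤ᵐ[volume.restrict (Set.Ioi 0)] fun s => -g' s * ‖ξ s‖ ^ 2 := by
    rw [Filter.EventuallyLE, ae_restrict_iff' measurableSet_Ioi]
    exact ae_of_all _ fun s hs => mul_nonneg (hg0 s hs) (sq_nonneg _)
  have hfin : (∫⁻ s in Set.Ioi (0:ℝ), ENNReal.ofReal (-g' s * ‖ξ s‖ ^ 2))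
      = ENNReal.ofReal (∫ s in Set.Ioi (0:ℝ), -g' s * ‖ξ s‖ ^ 2) :=
    (ofReal_integral_eq_lintegral_ofReal hint hnn).symm
  have hWeq : (∫⁻ y in Set.Ioi (0:ℝ), W y)
      = ∫⁻ s in Set.Ioi (0:ℝ), ENNReal.ofReal (-g' s * ‖ξ s‖ ^ 2) := by
    apply lintegral_congr_ae
    filter_upwards [hGe, hξe] with y h1y h2y
    have h1y' : -g' y = G y := h1y
    have h2y' : ξ y = ξ' y := h2y
    simp only [hWdef]
    rw [h1y', h2y']
  have hchain : (∫⁻ s in Set.Ioi (0:ℝ), ENNReal.ofReal (-g' s * ‖η s‖ ^ 2))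
      ≤ ENNReal.ofReal (∫ s in Set.Ioi (0:ℝ), -g' s * ‖ξ s‖ ^ 2) := by
    calc (∫⁻ s in Set.Ioi (0:ℝ), ENNReal.ofReal (-g' s * ‖η s‖ ^ 2))
        ≤ ∫⁻ s in Set.Ioi (0:ℝ), ∫⁻ y in Set.Ioc (0:ℝ) s,
            ENNReal.ofReal (Real.exp (y - s)) * W y := by
          apply lintegral_mono_ae
          rw [ae_restrict_iff' measurableSet_Ioi]
          exact ae_of_all _ fun s hs => (key s hs).2
      _ ≤ ∫⁻ y in Set.Ioi (0:ℝ), W y := aux_tonelli W hWm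
      _ = ENNReal.ofReal (∫ s in Set.Ioi (0:ℝ), -g' s * ‖ξ s‖ ^ 2) := by rw [hWeq, hfin]
  by_cases hI : IntegrableOn (fun s => -g' s * ‖η s‖ ^ 2) (Set.Ioi 0)
  · have hnnη : (0:ℝ→ℝ) ≤ᵐ[volume.restrict (Set.Ioi 0)] fun s => -g' s * ‖η s‖ ^ 2 := by
      rw [Filter.EventuallyLE, ae_restrict_iff' measurableSet_Ioi]
      exact ae_of_all _ fun s hs => mul_nonneg (hg0 s hs) (sq_nonneg _)
    rw [integral_eq_lintegral_of_nonneg_ae hnnη hI.aestronglyMeasurable,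
      integral_eq_lintegral_of_nonneg_ae hnn hint.aestronglyMeasurable]
    apply ENNReal.toReal_mono
    · rw [hfin]; exact ENNReal.ofReal_ne_top
    · rw [hfin]; exact hchain
  · rw [integral_undef hI]
    exact setIntegral_nonneg measurableSet_Ioi fun s hs => mul_nonneg (hg0 s hs) (sq_nonneg _)
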